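/- Let N be an odd positive integer with at least two distinct prime factors. If a is chosen uniformly at random from the multiplicative group (ℤ/Nℤ)^×, then with probability at least 1/2 the multiplicative order r of a modulo N is even and a^{r/2} ≢ −1 (mod N). Equivalently, the number of units a ∈ (ℤ/Nℤ)^× such that the order r of a is even and a^{r/2} ≠ −1 in ℤ/Nℤ is at least |(ℤ/Nℤ)^×|/2. -/

import Mathlib

open Finset

/-- In an odd prime power modulus, the only square roots of 1 are ±1. -/
lemma aux_sq_roots {p k : ℕ} (hp : p.Prime) (hodd : p ≠ 2) (hk : k ≠ 0)
    (x : ZMod (p ^ k)) (hx : x ^ 2 = 1) : x = 1 ∨ x = -1 := by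
  haveI : NeZero (p ^ k) := ⟨pow_ne_zero _ hp.pos.ne'⟩
  set a : ℤ := (x.val : ℤ) with ha
  have hax : ((a : ℤ) : ZMod (p ^ k)) = x := by
    rw [ha]; push_cast; exact ZMod.natCast_rightInverse x
  have hdvd : ((p ^ k : ℕ) : ℤ) ∣ (a + 1) * (a - 1) := by
    rw [← ZMod.intCast_zmod_eq_zero_iff_dvd]
    push_cast
    rw [hax]
    linear_combination hx
  have hprime : Prime (p : ℤ) := Nat.prime_iff_prime_int.mp hp
  have hdvd' : ((p : ℤ)) ^ k ∣ (a + 1) * (a - 1) := by push_cast at hdvd; exact_mod_cast hdvd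
  have hnotboth : ¬ ((p : ℤ) ∣ (a - 1) ∧ (p : ℤ) ∣ (a + 1)) := by
    rintro ⟨h1, h2⟩
    have hd2 : (p : ℤ) ∣ 2 := by have := dvd_sub h2 h1; simpa using this
    have hd2' : (p : ℕ) ∣ 2 := by exact_mod_cast hd2
    exact hodd ((Nat.prime_dvd_prime_iff_eq hp Nat.prime_two).mp hd2')
  by_cases h1 : (p : ℤ) ∣ (a + 1)
  · have h2 : ¬ (p : ℤ) ∣ (a - 1) := fun h => hnotboth ⟨h, h1⟩
    have hcop : IsCoprime ((p : ℤ)) (a - 1) :=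
      (hprime.irreducible.coprime_iff_not_dvd).mpr h2
    have hcop' : IsCoprime ((p : ℤ) ^ k) (a - 1) := hcop.pow_left
    have hfin : ((p : ℤ)) ^ k ∣ (a + 1) := hcop'.dvd_of_dvd_mul_right hdvd'
    right
    have hz : ((a + 1 : ℤ) : ZMod (p ^ k)) = 0 := by
      rw [ZMod.intCast_zmod_eq_zero_iff_dvd]; push_cast; exact_mod_cast hfin
    push_cast at hz
    rw [hax] at hz
    linear_combination hz
  · have hcop : IsCoprime ((p : ℤ)) (a + 1) :=
      (hprime.irreducible.coprime_iff_not_dvd).mpr h1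
    have hcop' : IsCoprime ((p : ℤ) ^ k) (a + 1) := hcop.pow_left
    have hfin : ((p : ℤ)) ^ k ∣ (a - 1) := hcop'.dvd_of_dvd_mul_left hdvd'
    left
    have hz : ((a - 1 : ℤ) : ZMod (p ^ k)) = 0 := by
      rw [ZMod.intCast_zmod_eq_zero_iff_dvd]; push_cast; exact_mod_cast hfin
    push_cast at hz
    rw [hax] at hz
    linear_combination hz

/-- Key counting lemma: in a finite commutative group of even order with at most two
square roots of 1, for each `j` at most half the elements have 2-adic valuation of
their order equal to `j`. -/
lemma aux_count {G : Type*} [CommGroup G] [Fintype G] [DecidableEq G]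
    (hEven : Even (Fintype.card G))
    (h2 : (univ.filter fun x : G => x ^ 2 = 1).card ≤ 2) (j : ℕ) :
    2 * (univ.filter fun x : G => (orderOf x).factorization 2 = j).card ≤ Fintype.card G := by
  have hn0 : Fintype.card G ≠ 0 := Fintype.card_ne_zero
  set n := Fintype.card G with hn
  have h2n : 2 ∣ n := hEven.two_dvd
  set t := ordCompl[2] n with ht
  have ht0 : t ≠ 0 := (Nat.ordCompl_pos 2 hn0).ne'
  have htodd : ¬ 2 ∣ t := Nat.not_dvd_ordCompl Nat.prime_two hn0
  have hts : 2 ^ (n.factorization 2) * t = n := Nat.ordProj_mul_ordCompl_eq_self n 2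
  have hordpos : ∀ x : G, orderOf x ≠ 0 := fun x => (orderOf_pos x).ne'
  rcases Nat.eq_zero_or_pos j with rfl | hj
  · -- j = 0 : elements of odd order form a proper subgroup
    have hset : (univ.filter fun x : G => (orderOf x).factorization 2 = 0)
        = (univ.filter fun x : G => Odd (orderOf x)) := by
      apply filter_congr
      intro x _
      constructor
      · intro h
        have h2d : ¬ 2 ∣ orderOf x := by
          intro hdvd
          have := Nat.Prime.factorization_pos_of_dvd Nat.prime_two (hordpos x) hdvd
          omega
        rw [Nat.odd_iff]; omega
      · intro h
        exact Nat.factorization_eq_zero_of_not_dvd (by rw [Nat.odd_iff] at h; omega)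
    rw [hset]
    let S : Subgroup G :=
      { carrier := {x : G | Odd (orderOf x)}
        one_mem' := by simp [Set.mem_setOf_eq]
        mul_mem' := by
          intro a b ha hb
          simp only [Set.mem_setOf_eq] at *
          have hdvd : orderOf (a * b) ∣ Nat.lcm (orderOf a) (orderOf b) :=
            (Commute.all a b).orderOf_mul_dvd_lcm
          have hlcm : ¬ 2 ∣ Nat.lcm (orderOf a) (orderOf b) := by
            intro h
            have h' : 2 ∣ orderOf a * orderOf b := h.trans (Nat.lcm_dvd_mul _ _)
            rw [Nat.odd_iff] at ha hb
            rcases (Nat.prime_two.dvd_mul).mp h' with h'' | h'' <;> omega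
          rw [Nat.odd_iff]
          have : ¬ 2 ∣ orderOf (a * b) := fun h => hlcm (h.trans hdvd)
          omega
        inv_mem' := by
          intro a ha
          simpa only [Set.mem_setOf_eq, orderOf_inv] using ha }
    have hcardS : (univ.filter fun x : G => Odd (orderOf x)).card = Nat.card S := by
      rw [← Fintype.card_subtype, ← Nat.card_eq_fintype_card]
      exact (Nat.card_congr (Equiv.subtypeEquivRight fun x => Iff.rfl)).symm
    have hdvdS : Nat.card S ∣ n := by
      have := Subgroup.card_subgroup_dvd_card S
      rwa [Nat.card_eq_fintype_card (α := G), ← hn] at this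
    haveI : Fact (Nat.Prime 2) := ⟨Nat.prime_two⟩
    obtain ⟨g, hg⟩ := exists_prime_orderOf_dvd_card 2 (hn ▸ h2n)
    have hgnot : ¬ Odd (orderOf g) := by rw [hg]; decide
    have hne : (univ.filter fun x : G => Odd (orderOf x)) ≠ univ := by
      intro h
      have hg' : g ∈ univ.filter fun x : G => Odd (orderOf x) := by rw [h]; exact mem_univ g
      exact hgnot (mem_filter.mp hg').2
    have hlt : (univ.filter fun x : G => Odd (orderOf x)).card < n := by
      have hsub := filter_subset (fun x : G => Odd (orderOf x)) univ
      have hle := card_le_card hsub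
      rw [Finset.card_univ] at hle
      rcases lt_or_eq_of_le hle with h | h
      · exact h
      · exact absurd (eq_of_subset_of_card_le hsub (le_of_eq ((Finset.card_univ (α := G)) ▸ h.symm)))
          hne
    rw [hcardS] at hlt ⊢
    obtain ⟨c, hc⟩ := hdvdS
    have hS0 : Nat.card S ≠ 0 := Nat.card_pos.ne'
    rcases Nat.lt_or_ge c 2 with hc2 | hc2
    · interval_cases c <;> omega
    · calc 2 * Nat.card S ≤ c * Nat.card S := Nat.mul_le_mul_right _ hc2
        _ = n := by rw [mul_comm]; exact hc.symm
  · -- j ≥ 1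
    obtain ⟨jj, rfl⟩ : ∃ jj, j = jj + 1 := ⟨j - 1, by omega⟩
    set A := univ.filter fun x : G => x ^ (2 ^ (jj + 1) * t) = 1 with hA
    set B := univ.filter fun x : G => x ^ (2 ^ jj * t) = 1 with hB
    have hBA : B ⊆ A := by
      intro x hx
      simp only [hA, hB, mem_filter, mem_univ, true_and,
        ← orderOf_dvd_iff_pow_eq_one] at *
      exact hx.trans (mul_dvd_mul_right (pow_dvd_pow 2 (Nat.le_succ jj)) t)
    have hsub : (univ.filter fun x : G => (orderOf x).factorization 2 = jj + 1) ⊆ A \ B := by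
      intro x hx
      simp only [mem_filter, mem_univ, true_and] at hx
      have hdn : orderOf x ∣ n := hn ▸ orderOf_dvd_card
      have hd0 : orderOf x ≠ 0 := hordpos x
      rw [mem_sdiff]
      constructor
      · simp only [hA, mem_filter, mem_univ, true_and]
        rw [← orderOf_dvd_iff_pow_eq_one]
        have hocodd : ¬ 2 ∣ ordCompl[2] (orderOf x) := Nat.not_dvd_ordCompl Nat.prime_two hd0
        have hcop : Nat.Coprime (ordCompl[2] (orderOf x)) (2 ^ (n.factorization 2)) :=
          Nat.Coprime.pow_right _ (Odd.coprime_two_right (Nat.odd_iff.mpr (by omega)))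
        have h1 : ordCompl[2] (orderOf x) ∣ 2 ^ (n.factorization 2) * t := by
          rw [hts]; exact (Nat.ordCompl_dvd _ 2).trans hdn
        have hoc : ordCompl[2] (orderOf x) ∣ t := hcop.dvd_of_dvd_mul_left h1
        have hdd : orderOf x ∣ 2 ^ ((orderOf x).factorization 2) * t := by
          conv_lhs => rw [← Nat.ordProj_mul_ordCompl_eq_self (orderOf x) 2]
          exact mul_dvd_mul_left _ hoc
        rw [hx] at hdd
        exact hdd
      · simp only [hB, mem_filter, mem_univ, true_and, ← orderOf_dvd_iff_pow_eq_one]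
        intro hdvd
        have h0 : (2 : ℕ) ^ jj * t ≠ 0 := by positivity
        have hle := (Nat.factorization_le_iff_dvd hd0 h0).mpr hdvd
        have h2' := hle 2
        rw [Nat.factorization_mul (by positivity) ht0, Nat.prime_two.factorization_pow] at h2'
        simp only [Finsupp.coe_add, Pi.add_apply, Finsupp.single_eq_same,
          Nat.factorization_eq_zero_of_not_dvd htodd] at h2'
        omega
    have hcard1 : (univ.filter fun x : G => (orderOf x).factorization 2 = jj + 1).card
        ≤ A.card - B.card := by
      have := card_le_card hsub
      rwa [card_sdiff_of_subset hBA] at this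
    have hA2B : A.card ≤ 2 * B.card := by
      have himage : A.image (fun x : G => x ^ 2) ⊆ B := by
        intro y hy
        simp only [mem_image] at hy
        obtain ⟨x, hxA, rfl⟩ := hy
        simp only [hA, hB, mem_filter, mem_univ, true_and] at *
        rw [← pow_mul]
        have harith : 2 * (2 ^ jj * t) = 2 ^ (jj + 1) * t := by ring
        rw [harith]
        exact hxA
      calc A.card ≤ 2 * (A.image (fun x : G => x ^ 2)).card := by
            apply card_le_mul_card_image
            intro b hb
            by_cases hfe : (A.filter fun x => x ^ 2 = b).Nonempty
            · obtain ⟨x₀, hx₀⟩ := hfe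
              simp only [mem_filter] at hx₀
              calc (A.filter fun x => x ^ 2 = b).card
                  ≤ (univ.filter fun x : G => x ^ 2 = 1).card := by
                    apply card_le_card_of_injOn (fun x => x * x₀⁻¹)
                    · intro x hx
                      simp only [Finset.mem_coe, mem_filter, mem_univ, true_and] at hx ⊢
                      rw [mul_pow, inv_pow, hx.2, hx₀.2, mul_inv_cancel]
                    · intro a _ b _ hab
                      exact mul_right_cancel hab
                _ ≤ 2 := h2
            · rw [not_nonempty_iff_eq_empty] at hfe
              simp [hfe]
        _ ≤ 2 * B.card := Nat.mul_le_mul_left _ (card_le_card himage)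
    have hAn : A.card ≤ n := by
      have := card_le_card (subset_univ A)
      rwa [Finset.card_univ] at this
    have hBAc : B.card ≤ A.card := card_le_card hBA
    omega

/-- Valuation extraction: if `d ∣ r`, `r` even, and `d ∤ r/2`, then `v₂ d = v₂ r`. -/
lemma aux_v2 {d r : ℕ} (hd0 : d ≠ 0) (hr0 : r ≠ 0) (hev : Even r) (hdvd : d ∣ r)
    (hnd : ¬ d ∣ r / 2) : d.factorization 2 = r.factorization 2 := by
  have hle : d.factorization 2 ≤ r.factorization 2 :=
    (Nat.factorization_le_iff_dvd hd0 hr0).mpr hdvd 2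
  by_contra hne
  have hlt : d.factorization 2 < r.factorization 2 := lt_of_le_of_ne hle hne
  have h2d : 2 * d ∣ r := by
    rw [← Nat.factorization_le_iff_dvd (by positivity) hr0]
    intro l
    rw [Nat.factorization_mul two_ne_zero hd0]
    have hall := (Nat.factorization_le_iff_dvd hd0 hr0).mpr hdvd l
    rw [Nat.prime_two.factorization]
    by_cases hl : l = 2
    · subst hl
      simp only [Finsupp.coe_add, Pi.add_apply, Finsupp.single_eq_same]
      omega
    · simp only [Finsupp.coe_add, Pi.add_apply, Finsupp.single_eq_of_ne' (Ne.symm hl)]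
      omega
  obtain ⟨c, hc⟩ := hev
  have hrc : r = 2 * c := by omega
  have hr2 : r / 2 = c := by omega
  apply hnd
  rw [hr2]
  rw [hrc] at h2d
  exact (Nat.mul_dvd_mul_iff_left (by norm_num : (0:ℕ) < 2)).mp h2d

theorem stmt_0 (N : ℕ) (hN : Odd N) (p q : ℕ) (hp : p.Prime) (hq : q.Prime)
    (hpq : p ≠ q) (hpN : p ∣ N) (hqN : q ∣ N) :
    Nat.card (ZMod N)ˣ ≤
      2 * Nat.card {a : (ZMod N)ˣ //
        Even (orderOf a) ∧ ((a : ZMod N) ^ (orderOf a / 2) ≠ -1)} := by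
  have hN0 : N ≠ 0 := by rintro rfl; rw [Nat.odd_iff] at hN; omega
  haveI : NeZero N := ⟨hN0⟩
  have hNodd : ¬ 2 ∣ N := by rw [Nat.odd_iff] at hN; omega
  have hp2 : p ≠ 2 := by rintro rfl; exact hNodd hpN
  have hq2 : q ≠ 2 := by rintro rfl; exact hNodd hqN
  set k := N.factorization p with hkdef
  have hk1 : 1 ≤ k := hp.factorization_pos_of_dvd hN0 hpN
  set m := ordCompl[p] N with hmdef
  have hm0 : m ≠ 0 := (Nat.ordCompl_pos p hN0).ne'
  have hNeq : p ^ k * m = N := Nat.ordProj_mul_ordCompl_eq_self N p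
  have hcop : Nat.Coprime (p ^ k) m := Nat.Coprime.pow_left _ (Nat.coprime_ordCompl hp hN0)
  have hqm : q ∣ m := by
    have hqpk : Nat.Coprime q (p ^ k) :=
      Nat.Coprime.pow_right _ ((Nat.coprime_primes hq hp).mpr (Ne.symm hpq))
    have hqN' : q ∣ p ^ k * m := by rw [hNeq]; exact hqN
    exact hqpk.dvd_of_dvd_mul_left hqN'
  haveI : NeZero (p ^ k) := ⟨pow_ne_zero _ hp.pos.ne'⟩
  haveI : NeZero m := ⟨hm0⟩
  have hp3 : 3 ≤ p := by have := hp.two_le; omega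
  have hpk3 : 2 < p ^ k := by
    calc 2 < p := by omega
      _ = p ^ 1 := (pow_one p).symm
      _ ≤ p ^ k := Nat.pow_le_pow_right hp.pos hk1
  have hm3 : 2 < m := by
    have hq3 : 3 ≤ q := by have := hq.two_le; omega
    have := Nat.le_of_dvd (Nat.pos_of_ne_zero hm0) hqm
    omega
  haveI : Fact (2 < p ^ k) := ⟨hpk3⟩
  haveI : Fact (2 < m) := ⟨hm3⟩
  set e₀ : ZMod N ≃+* ZMod (p ^ k) × ZMod m :=
    (ZMod.ringEquivCongr hNeq.symm).trans (ZMod.chineseRemainder hcop) with he₀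
  set E : (ZMod N)ˣ ≃* (ZMod (p ^ k))ˣ × (ZMod m)ˣ :=
    (Units.mapEquiv e₀.toMulEquiv).trans MulEquiv.prodUnits with hE
  have hcoe1 : ∀ u : (ZMod N)ˣ, ((E u).1 : ZMod (p ^ k)) = (e₀ (u : ZMod N)).1 := fun u => rfl
  have hcoe2 : ∀ u : (ZMod N)ˣ, ((E u).2 : ZMod m) = (e₀ (u : ZMod N)).2 := fun u => rfl
  -- the key pointwise fact
  have key : ∀ a : (ZMod N)ˣ,
      ¬ (Even (orderOf a) ∧ ((a : ZMod N) ^ (orderOf a / 2) ≠ -1)) →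
      (orderOf (E a).1).factorization 2 = (orderOf (E a).2).factorization 2 := by
    intro a hbad
    have hordE : orderOf (E a) = orderOf a := MulEquiv.orderOf_eq E a
    have hlcm : orderOf a = Nat.lcm (orderOf (E a).1) (orderOf (E a).2) := by
      rw [← hordE]; exact Prod.orderOf (E a)
    have hd1 : orderOf (E a).1 ∣ orderOf a := by rw [hlcm]; exact Nat.dvd_lcm_left _ _
    have hd2 : orderOf (E a).2 ∣ orderOf a := by rw [hlcm]; exact Nat.dvd_lcm_right _ _
    have hr0 : orderOf a ≠ 0 := (orderOf_pos a).ne'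
    have h10 : orderOf (E a).1 ≠ 0 := (orderOf_pos _).ne'
    have h20 : orderOf (E a).2 ≠ 0 := (orderOf_pos _).ne'
    by_cases hev : Even (orderOf a)
    · have heq : (a : ZMod N) ^ (orderOf a / 2) = -1 := by
        by_contra hne; exact hbad ⟨hev, hne⟩
      have he : e₀ ((a : ZMod N) ^ (orderOf a / 2)) = e₀ (-1) := congrArg e₀ heq
      rw [map_pow, map_neg, map_one] at he
      have h1 : ((E a).1 : ZMod (p ^ k)) ^ (orderOf a / 2) = -1 := by
        rw [hcoe1]
        have := congrArg Prod.fst he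
        simpa using this
      have h2 : ((E a).2 : ZMod m) ^ (orderOf a / 2) = -1 := by
        rw [hcoe2]
        have := congrArg Prod.snd he
        simpa using this
      have hnd1 : ¬ orderOf (E a).1 ∣ orderOf a / 2 := by
        intro h
        have hu : (E a).1 ^ (orderOf a / 2) = 1 := orderOf_dvd_iff_pow_eq_one.mp h
        have : ((E a).1 : ZMod (p ^ k)) ^ (orderOf a / 2) = 1 := by
          rw [← Units.val_pow_eq_pow_val, hu, Units.val_one]
        rw [h1] at this
        exact ZMod.neg_one_ne_one this
      have hnd2 : ¬ orderOf (E a).2 ∣ orderOf a / 2 := by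
        intro h
        have hu : (E a).2 ^ (orderOf a / 2) = 1 := orderOf_dvd_iff_pow_eq_one.mp h
        have : ((E a).2 : ZMod m) ^ (orderOf a / 2) = 1 := by
          rw [← Units.val_pow_eq_pow_val, hu, Units.val_one]
        rw [h2] at this
        exact ZMod.neg_one_ne_one this
      rw [aux_v2 h10 hr0 hev hd1 hnd1, aux_v2 h20 hr0 hev hd2 hnd2]
    · have hodd : Odd (orderOf a) := Nat.not_even_iff_odd.mp hev
      have hno2 : ¬ 2 ∣ orderOf a := by rw [Nat.odd_iff] at hodd; omega
      rw [Nat.factorization_eq_zero_of_not_dvd (fun h => hno2 (h.trans hd1)),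
        Nat.factorization_eq_zero_of_not_dvd (fun h => hno2 (h.trans hd2))]
  -- counting
  classical
  set Good := univ.filter fun a : (ZMod N)ˣ =>
    Even (orderOf a) ∧ ((a : ZMod N) ^ (orderOf a / 2) ≠ -1) with hGood
  set Bad := univ.filter fun a : (ZMod N)ˣ =>
    ¬ (Even (orderOf a) ∧ ((a : ZMod N) ^ (orderOf a / 2) ≠ -1)) with hBad
  have hsplit : Good.card + Bad.card = Fintype.card (ZMod N)ˣ := by
    rw [hGood, hBad, card_filter_add_card_filter_not, card_univ]
  set Pair := univ.filter fun z : (ZMod (p ^ k))ˣ × (ZMod m)ˣ =>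
    (orderOf z.1).factorization 2 = (orderOf z.2).factorization 2 with hPairdef
  have hBadPair : Bad.card ≤ Pair.card := by
    apply card_le_card_of_injOn (fun a => E a)
    · intro a ha
      rw [Finset.mem_coe, hBad, mem_filter] at ha
      rw [Finset.mem_coe, hPairdef, mem_filter]
      exact ⟨mem_univ _, key a ha.2⟩
    · exact fun a _ b _ h => E.injective h
  have hEven1 : Even (Fintype.card (ZMod (p ^ k))ˣ) := by
    rw [ZMod.card_units_eq_totient]; exact Nat.totient_even hpk3
  have h2bound : (univ.filter fun x : (ZMod (p ^ k))ˣ => x ^ 2 = 1).card ≤ 2 := by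
    have hsub2 : (univ.filter fun x : (ZMod (p ^ k))ˣ => x ^ 2 = 1)
        ⊆ ({1, -1} : Finset (ZMod (p ^ k))ˣ) := by
      intro u hu
      simp only [mem_filter, mem_univ, true_and] at hu
      have hval : (u : ZMod (p ^ k)) ^ 2 = 1 := by
        rw [← Units.val_pow_eq_pow_val, hu, Units.val_one]
      rcases aux_sq_roots hp hp2 (by omega : k ≠ 0) _ hval with h | h
      · simp only [mem_insert, mem_singleton]
        left; exact Units.ext h
      · simp only [mem_insert, mem_singleton]
        right; exact Units.ext (by rw [h]; rfl)
    calc (univ.filter fun x : (ZMod (p ^ k))ˣ => x ^ 2 = 1).card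
        ≤ ({1, -1} : Finset (ZMod (p ^ k))ˣ).card := card_le_card hsub2
      _ ≤ 2 := by
          apply (card_insert_le _ _).trans
          simp
  have hPair2 : 2 * Pair.card ≤ Fintype.card ((ZMod (p ^ k))ˣ × (ZMod m)ˣ) := by
    have hfib : Pair.card = ∑ y ∈ univ, (Pair.filter fun z => z.2 = y).card :=
      card_eq_sum_card_fiberwise (fun x _ => mem_univ x.2)
    rw [hfib, Finset.mul_sum]
    have hbound : ∀ y : (ZMod m)ˣ,
        2 * (Pair.filter fun z => z.2 = y).card ≤ Fintype.card (ZMod (p ^ k))ˣ := by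
      intro y
      have hfil : (Pair.filter fun z => z.2 = y).card ≤
          (univ.filter fun x : (ZMod (p ^ k))ˣ =>
            (orderOf x).factorization 2 = (orderOf y).factorization 2).card := by
        apply card_le_card_of_injOn (fun z => z.1)
        · intro z hz
          rw [Finset.mem_coe, mem_filter, hPairdef, mem_filter] at hz
          obtain ⟨⟨-, h1⟩, h2⟩ := hz
          rw [Finset.mem_coe, mem_filter]
          exact ⟨mem_univ _, h2 ▸ h1⟩
        · intro z1 hz1 z2 hz2 h
          simp only [Finset.mem_coe, mem_filter] at hz1 hz2
          exact Prod.ext h (hz1.2.trans hz2.2.symm)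
      calc 2 * (Pair.filter fun z => z.2 = y).card
          ≤ 2 * (univ.filter fun x : (ZMod (p ^ k))ˣ =>
              (orderOf x).factorization 2 = (orderOf y).factorization 2).card :=
            Nat.mul_le_mul_left _ hfil
        _ ≤ Fintype.card (ZMod (p ^ k))ˣ := aux_count hEven1 h2bound _
    calc ∑ y ∈ univ, 2 * (Pair.filter fun z => z.2 = y).card
        ≤ ∑ _y ∈ (univ : Finset (ZMod m)ˣ), Fintype.card (ZMod (p ^ k))ˣ :=
          Finset.sum_le_sum fun y _ => hbound y
      _ = Fintype.card (ZMod m)ˣ * Fintype.card (ZMod (p ^ k))ˣ := by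
          rw [Finset.sum_const, card_univ, smul_eq_mul]
      _ = Fintype.card ((ZMod (p ^ k))ˣ × (ZMod m)ˣ) := by
          rw [Fintype.card_prod, mul_comm]
  have hcardEq : Fintype.card ((ZMod (p ^ k))ˣ × (ZMod m)ˣ) = Fintype.card (ZMod N)ˣ :=
    (Fintype.card_congr E.toEquiv).symm
  have hGoodcard : Nat.card {a : (ZMod N)ˣ //
      Even (orderOf a) ∧ ((a : ZMod N) ^ (orderOf a / 2) ≠ -1)} = Good.card := by
    rw [Nat.card_eq_fintype_card, Fintype.card_subtype]
  rw [Nat.card_eq_fintype_card, hGoodcard]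
  omega
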